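/- Every zero-preserving delaying map n on G^ℕ is quasiregular in PP(G): there exists a zero-preserving prefix-preserving map m : G^ℕ → G^ℕ such that m ∘ (id − n) = id, where (id − n)(x) = x − n(x) for all x ∈ G^ℕ. -/
import Mathlib


/-- A map on sequences over `G` is prefix preserving. -/
def PrefixPreserving {G : Type*} [AddGroup G] (n : (ℕ → G) → (ℕ → G)) : Prop :=
  ∀ k : ℕ, ∀ x y : ℕ → G, (∀ i < k, x i = y i) → ∀ i < k, n x i = n y i

/-- A map on sequences over `G` is zero preserving. -/
def ZeroPreserving {G : Type*} [AddGroup G] (n : (ℕ → G) → (ℕ → G)) : Prop :=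
  n 0 = 0

/-- A map on sequences over `G` is delaying if inputs agreeing on all positions `< k`
produce outputs agreeing on all positions `≤ k`. -/
def Delaying {G : Type*} [AddGroup G] (n : (ℕ → G) → (ℕ → G)) : Prop :=
  ∀ k : ℕ, ∀ x y : ℕ → G, (∀ i < k, x i = y i) → ∀ i ≤ k, n x i = n y i

/-- Successive approximations to the solution of `x = y + n x`. -/
def qrApprox {G : Type*} [AddGroup G] (n : (ℕ → G) → (ℕ → G)) (y : ℕ → G) : ℕ → ℕ → G
  | 0 => 0
  | k + 1 => Function.update (qrApprox n y k) k (y k + n (qrApprox n y k) k)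

/-- The candidate inverse map. -/
def qrSolve {G : Type*} [AddGroup G] (n : (ℕ → G) → (ℕ → G)) (y : ℕ → G) (k : ℕ) : G :=
  qrApprox n y (k + 1) k

lemma qrApprox_stable {G : Type*} [AddGroup G] (n : (ℕ → G) → (ℕ → G)) (y : ℕ → G) :
    ∀ k, ∀ i < k, qrApprox n y k i = qrSolve n y i := by
  intro k
  induction k with
  | zero => intro i hi; omega
  | succ k ih =>
    intro i hi
    rcases Nat.lt_succ_iff_lt_or_eq.mp hi with h | h
    · show Function.update (qrApprox n y k) k _ i = _
      rw [Function.update_of_ne (by omega)]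
      exact ih i h
    · subst h; rfl

lemma qrSolve_eq {G : Type*} [AddGroup G] (n : (ℕ → G) → (ℕ → G)) (y : ℕ → G) (k : ℕ) :
    qrSolve n y k = y k + n (qrApprox n y k) k := by
  show Function.update (qrApprox n y k) k _ k = _
  rw [Function.update_self]

/-- Every zero-preserving delaying map `n` is quasiregular in `PP(G)`: there is a
zero-preserving prefix-preserving map `m` with `m ∘ (id - n) = id`. -/
theorem delaying_quasiregular {G : Type*} [AddGroup G]
    (n : (ℕ → G) → (ℕ → G)) (hn0 : ZeroPreserving n) (hnd : Delaying n) :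
    ∃ m : (ℕ → G) → (ℕ → G), ZeroPreserving m ∧ PrefixPreserving m ∧
      m ∘ (fun x => x - n x) = id := by
  refine ⟨qrSolve n, ?_, ?_, ?_⟩
  · -- zero preserving
    have happ : ∀ k, qrApprox n (0 : ℕ → G) k = 0 := by
      intro k
      induction k with
      | zero => rfl
      | succ k ih =>
        funext i
        show Function.update (qrApprox n 0 k) k _ i = _
        rcases eq_or_ne i k with h | h
        · subst h
          rw [Function.update_self, ih, hn0]
          simp
        · rw [Function.update_of_ne h, ih]
    funext k
    rw [qrSolve_eq, happ, hn0]
    simp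
  · -- prefix preserving
    intro k a b hab i
    induction i using Nat.strong_induction_on with
    | _ i ih =>
      intro hik
      rw [qrSolve_eq, qrSolve_eq, hab i hik]
      congr 1
      refine hnd i _ _ (fun j hj => ?_) i le_rfl
      rw [qrApprox_stable n a i j hj, qrApprox_stable n b i j hj,
        ih j hj (hj.trans hik)]
  · -- left inverse of id - n
    funext x k
    simp only [Function.comp_apply, id_eq]
    induction k using Nat.strong_induction_on with
    | _ k ih =>
      rw [qrSolve_eq]
      have : n (qrApprox n (x - n x) k) k = n x k := by
        refine hnd k _ _ (fun j hj => ?_) k le_rfl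
        rw [qrApprox_stable n _ k j hj, ih j hj]
      rw [this]
      simp
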